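/- Let l ∈ ℕ with l ≥ 2 and let μ ∈ ℝ with μ ≠ 0. Define the polynomials Q(x) = Σ_{n=0}^{l+2} ((l−1)_n·(−l−2)_n)/((−1−iμ)_n · n!) · xⁿ and P(x) = Σ_{n=0}^{l+2} ((l−1)_n·(−l−2)_n)/((−1+iμ)_n · n!) · (1−x)ⁿ (both well defined, since (−1±iμ)_n ≠ 0 because −1±iμ is not real). Then P(x) = T·Q(x) for all x ∈ ℂ, where T := (∏_{k=−l}^{1} (k+iμ)) / (∏_{k=−1}^{l} (k+iμ)); in particular T ≠ 0 and |T| = 1. -/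

import Mathlib

open Finset

noncomputable def pr (z : ℂ) (n : ℕ) : ℂ := ∏ i ∈ Finset.range n, (z + i)

lemma asc_eq_pr (z : ℂ) (n : ℕ) : (ascPochhammer ℂ n).eval z = pr z n := by
  induction n with
  | zero => simp [pr]
  | succ n ih => rw [ascPochhammer_succ_eval, ih, pr, pr, Finset.prod_range_succ]

lemma pr_add (z : ℂ) (k j : ℕ) : pr z (k + j) = pr z k * pr (z + k) j := by
  rw [pr, pr, pr, Finset.prod_range_add]
  congr 1
  exact Finset.prod_congr rfl fun i _ => by push_cast; ring

lemma pr_ne_zero {z : ℂ} (hz : z.im ≠ 0) (n : ℕ) : pr z n ≠ 0 := by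
  rw [pr]
  apply Finset.prod_ne_zero_iff.2
  intro i _
  intro h
  apply hz
  have := congrArg Complex.im h
  simpa using this

lemma cast_sub_sub {n i : ℕ} (hi : i < n) : ((n - 1 - i : ℕ) : ℂ) = (n : ℂ) - 1 - i := by
  have h : (n - 1 - i) + (i + 1) = n := by omega
  have := congrArg (fun t : ℕ => (t : ℂ)) h
  push_cast at this
  linear_combination this

lemma prod_desc_eq_pr (w : ℂ) (n : ℕ) :
    ∏ i ∈ Finset.range n, (w + (n : ℂ) - 1 - i) = pr w n := by
  rw [pr, ← Finset.prod_range_reflect]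
  refine Finset.prod_congr rfl fun i hi => ?_
  rw [cast_sub_sub (Finset.mem_range.1 hi)]
  ring

lemma pr_reflect (z : ℂ) (k : ℕ) : pr (z - k + 1) k = (-1) ^ k * pr (-z) k := by
  rw [← prod_desc_eq_pr (-z) k, pr]
  have : ∀ i ∈ Finset.range k, z - (k:ℂ) + 1 + i = -1 * (-z + (k:ℂ) - 1 - i) := by
    intro i _; ring
  rw [Finset.prod_congr rfl this, Finset.prod_mul_distrib, Finset.prod_const]
  simp [Finset.card_range]
open Finset

lemma vdm (N : ℕ) (x y : ℂ) :
    ∏ i ∈ Finset.range N, (x + y - i) =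
      ∑ j ∈ Finset.range (N + 1), (N.choose j : ℂ) *
        (∏ i ∈ Finset.range j, (x - i)) * ∏ i ∈ Finset.range (N - j), (y - i) := by
  induction N with
  | zero => simp
  | succ N ih =>
    have hP : ∀ j : ℕ, (∏ i ∈ Finset.range (j+1), (x - i)) =
        (∏ i ∈ Finset.range j, (x - i)) * (x - j) := fun j => Finset.prod_range_succ _ j
    rw [Finset.prod_range_succ, ih]
    rw [Finset.sum_mul]
    -- term-wise rewrite
    have key : ∀ j ∈ Finset.range (N + 1),
        (N.choose j : ℂ) * (∏ i ∈ Finset.range j, (x - i)) * (∏ i ∈ Finset.range (N - j), (y - i))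
          * (x + y - N)
        = (N.choose j : ℂ) * (∏ i ∈ Finset.range (j+1), (x - i)) * (∏ i ∈ Finset.range (N - j), (y - i))
          + (N.choose j : ℂ) * (∏ i ∈ Finset.range j, (x - i)) * (∏ i ∈ Finset.range (N + 1 - j), (y - i)) := by
      intro j hj
      have hj' : j ≤ N := by simpa [Nat.lt_succ_iff] using hj
      have h1 : (∏ i ∈ Finset.range (j+1), (x - i)) =
          (∏ i ∈ Finset.range j, (x - i)) * (x - j) := Finset.prod_range_succ _ j
      have h2 : (∏ i ∈ Finset.range (N + 1 - j), (y - i)) =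
          (∏ i ∈ Finset.range (N - j), (y - i)) * (y - (N - j : ℕ)) := by
        have : N + 1 - j = (N - j) + 1 := by omega
        rw [this, Finset.prod_range_succ]
      have hc : ((N - j : ℕ) : ℂ) = (N : ℂ) - j := by
        have h := congrArg (fun t : ℕ => (t : ℂ)) (Nat.sub_add_cancel hj')
        push_cast at h
        linear_combination h
      rw [h1, h2, hc]
      ring
    rw [Finset.sum_congr rfl key, Finset.sum_add_distrib]
    -- now RHS target
    have target : ∑ j ∈ Finset.range (N + 2), ((N+1).choose j : ℂ) *
        (∏ i ∈ Finset.range j, (x - i)) * ∏ i ∈ Finset.range (N + 1 - j), (y - i)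
        = (∑ j ∈ Finset.range (N + 1), (N.choose j : ℂ) *
            (∏ i ∈ Finset.range (j+1), (x - i)) * ∏ i ∈ Finset.range (N - j), (y - i))
          + ∑ j ∈ Finset.range (N + 1), (N.choose j : ℂ) *
            (∏ i ∈ Finset.range j, (x - i)) * ∏ i ∈ Finset.range (N + 1 - j), (y - i) := by
      rw [Finset.sum_range_succ' (fun j => ((N+1).choose j : ℂ) *
        (∏ i ∈ Finset.range j, (x - i)) * ∏ i ∈ Finset.range (N + 1 - j), (y - i)) (N+1)]
      have e1 : ∀ j ∈ Finset.range (N+1), ((N+1).choose (j+1) : ℂ) *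
          (∏ i ∈ Finset.range (j+1), (x - i)) * ∏ i ∈ Finset.range (N + 1 - (j+1)), (y - i)
          = (N.choose j : ℂ) * (∏ i ∈ Finset.range (j+1), (x - i)) * (∏ i ∈ Finset.range (N - j), (y - i))
            + (N.choose (j+1) : ℂ) * (∏ i ∈ Finset.range (j+1), (x - i)) * (∏ i ∈ Finset.range (N - j), (y - i)) := by
        intro j hj
        have : N + 1 - (j+1) = N - j := by omega
        rw [this, Nat.choose_succ_succ]
        push_cast
        ring
      rw [Finset.sum_congr rfl e1, Finset.sum_add_distrib]
      have e2 : ∑ j ∈ Finset.range (N + 1), (N.choose j : ℂ) *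
            (∏ i ∈ Finset.range j, (x - i)) * ∏ i ∈ Finset.range (N + 1 - j), (y - i)
          = (∑ j ∈ Finset.range (N+1), (N.choose (j+1) : ℂ) *
            (∏ i ∈ Finset.range (j+1), (x - i)) * (∏ i ∈ Finset.range (N - j), (y - i)))
            + ((N+1).choose 0 : ℂ) * (∏ i ∈ Finset.range 0, (x - i)) * ∏ i ∈ Finset.range (N + 1 - 0), (y - i) := by
        rw [Finset.sum_range_succ' (fun j => (N.choose j : ℂ) *
          (∏ i ∈ Finset.range j, (x - i)) * ∏ i ∈ Finset.range (N + 1 - j), (y - i)) N]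
        rw [Finset.sum_range_succ (fun j => (N.choose (j+1) : ℂ) *
          (∏ i ∈ Finset.range (j+1), (x - i)) * (∏ i ∈ Finset.range (N - j), (y - i))) N]
        simp [Nat.choose_succ_self]
      rw [e2]
      ring
    rw [target]

lemma gauss_prod (N : ℕ) (α γ : ℂ) :
    ∑ j ∈ Finset.range (N+1), (-1)^j * (N.choose j : ℂ) * pr α j * pr (γ + j) (N - j)
      = pr (γ - α) N := by
  have h := vdm N (-α) (γ + N - 1)
  have hl : ∏ i ∈ Finset.range N, (-α + (γ + N - 1) - i) = pr (γ - α) N := by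
    rw [← prod_desc_eq_pr (γ - α) N]; exact Finset.prod_congr rfl fun i _ => by ring
  rw [hl] at h
  rw [h]
  refine Finset.sum_congr rfl fun j hj => ?_
  have hjN : j ≤ N := Nat.lt_succ_iff.1 (Finset.mem_range.1 hj)
  have h1 : ∏ i ∈ Finset.range j, (-α - i) = (-1)^j * pr α j := by
    rw [pr]
    have e : ∀ i ∈ Finset.range j, -α - (i:ℂ) = -1 * (α + i) := fun i _ => by ring
    rw [Finset.prod_congr rfl e, Finset.prod_mul_distrib, Finset.prod_const, Finset.card_range]
  have hc : ((N - j : ℕ):ℂ) = (N:ℂ) - j := by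
    have h' := congrArg (fun t : ℕ => (t:ℂ)) (Nat.sub_add_cancel hjN)
    push_cast at h'
    linear_combination h'
  have h2 : ∏ i ∈ Finset.range (N-j), (γ + N - 1 - i) = pr (γ + j) (N - j) := by
    rw [← prod_desc_eq_pr (γ + j) (N - j)]
    refine Finset.prod_congr rfl fun i _ => by rw [hc]; ring
  rw [h1, h2]
  ring

lemma pr_neg_nat (N j : ℕ) (hj : j ≤ N) :
    pr (-(N:ℂ)) j = (-1)^j * (j.factorial : ℂ) * (N.choose j : ℂ) := by
  rw [pr]
  have e : ∀ i ∈ Finset.range j, (-(N:ℂ) + i) = -1 * ((N:ℂ) - i) := fun i _ => by ring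
  rw [Finset.prod_congr rfl e, Finset.prod_mul_distrib, Finset.prod_const, Finset.card_range]
  have e2 : ∀ i ∈ Finset.range j, ((N:ℂ) - i) = ((N - i : ℕ) : ℂ) := by
    intro i hi
    have hiN : i ≤ N := by have := Finset.mem_range.1 hi; omega
    rw [Nat.cast_sub hiN]
  rw [Finset.prod_congr rfl e2, ← Nat.cast_prod,
    ← Nat.descFactorial_eq_prod_range, Nat.descFactorial_eq_factorial_mul_choose]
  push_cast
  ring

lemma gauss (N : ℕ) (α γ : ℂ) (hγ : γ.im ≠ 0) :
    ∑ j ∈ Finset.range (N+1), pr α j * pr (-(N:ℂ)) j / (pr γ j * (j.factorial : ℂ))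
      = pr (γ - α) N / pr γ N := by
  rw [← gauss_prod N α γ, Finset.sum_div]
  refine Finset.sum_congr rfl fun j hj => ?_
  have hjN : j ≤ N := Nat.lt_succ_iff.1 (Finset.mem_range.1 hj)
  have hsplit : pr γ N = pr γ j * pr (γ + j) (N - j) := by
    rw [← pr_add]; congr 1; omega
  rw [pr_neg_nat N j hjN, hsplit]
  have h1 : pr γ j ≠ 0 := pr_ne_zero hγ j
  have h2 : pr (γ + j) (N - j) ≠ 0 := pr_ne_zero (by simpa using hγ) (N - j)
  have h3 : (j.factorial : ℂ) ≠ 0 := Nat.cast_ne_zero.2 (Nat.factorial_ne_zero j)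
  field_simp



/-- The zero-frequency transmission coefficient of the right event horizon. -/
noncomputable def heunT (l : ℕ) (μ : ℝ) : ℂ :=
  (∏ k ∈ Finset.Icc (-(l : ℤ)) 1, ((k : ℂ) + Complex.I * (μ : ℂ))) /
    ∏ k ∈ Finset.Icc (-1 : ℤ) (l : ℤ), ((k : ℂ) + Complex.I * (μ : ℂ))

lemma prod_Icc_pr (μ : ℝ) (a : ℤ) (n : ℕ) :
    ∏ k ∈ Finset.Icc a (a + n - 1), ((k:ℂ) + Complex.I * μ) = pr ((a:ℂ) + Complex.I * μ) n := by
  have hmap : Finset.Icc a (a + n - 1) =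
      Finset.map ⟨fun i : ℕ => a + i, fun x y h => by exact_mod_cast add_left_cancel h⟩ (Finset.range n) := by
    ext k
    simp only [Finset.mem_Icc, Finset.mem_map, Finset.mem_range, Function.Embedding.coeFn_mk]
    dsimp only [DFunLike.coe]
    constructor
    · intro hk; exact ⟨(k - a).toNat, by omega, by omega⟩
    · rintro ⟨i, hi, rfl⟩; omega
  rw [hmap, Finset.prod_map, pr]
  refine Finset.prod_congr rfl fun i _ => ?_
  dsimp only [DFunLike.coe]
  push_cast
  ring

lemma heunT_eq (l : ℕ) (μ : ℝ) :
    heunT l μ = pr (-(l:ℂ) + Complex.I * μ) (l+2) / pr (-1 + Complex.I * μ) (l+2) := by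
  have h1 := prod_Icc_pr μ (-(l:ℤ)) (l+2)
  have h2 := prod_Icc_pr μ (-1) (l+2)
  have e1 : (-(l:ℤ)) + ((l:ℕ)+2 : ℕ) - 1 = 1 := by push_cast; omega
  have e2 : (-1 : ℤ) + ((l:ℕ)+2 : ℕ) - 1 = (l:ℤ) := by push_cast; omega
  rw [e1] at h1
  rw [e2] at h2
  rw [heunT, h1, h2]
  norm_num

lemma im_ne {μ : ℝ} (hμ : μ ≠ 0) (r : ℂ) (hr : r.im = 0) : (r + Complex.I * μ).im ≠ 0 := by
  simp [Complex.add_im, Complex.mul_im, hr, hμ]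

lemma heunT_ne_abs (l : ℕ) (μ : ℝ) (hμ : μ ≠ 0) :
    heunT l μ ≠ 0 ∧ ‖heunT l μ‖ = 1 := by
  have hnum : pr (-(l:ℂ) + Complex.I * μ) (l+2) ≠ 0 := pr_ne_zero (im_ne hμ _ (by simp)) _
  have hden : pr (-1 + Complex.I * μ) (l+2) ≠ 0 := pr_ne_zero (im_ne hμ _ (by simp)) _
  have habs : ‖pr (-(l:ℂ) + Complex.I * μ) (l+2)‖
      = ‖pr (-1 + Complex.I * μ) (l+2)‖ := by
    rw [pr, pr, norm_prod, norm_prod, ← Finset.prod_range_reflect]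
    refine Finset.prod_congr rfl fun i hi => ?_
    have hi' : i < l + 2 := Finset.mem_range.1 hi
    have hc : ((l + 2 - 1 - i : ℕ) : ℂ) = (l:ℂ) + 2 - 1 - i := by
      rw [cast_sub_sub hi']; push_cast; ring
    rw [hc]
    have : -(l:ℂ) + Complex.I * μ + ((l:ℂ) + 2 - 1 - i)
        = -((starRingEnd ℂ) (-1 + Complex.I * μ + i)) := by
      rw [map_add, map_add, map_mul]
      simp [Complex.conj_I, Complex.conj_natCast, Complex.conj_ofReal]
      ring
    rw [this, norm_neg, Complex.norm_conj]
  constructor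
  · rw [heunT_eq]; exact div_ne_zero hnum hden
  · rw [heunT_eq, norm_div, habs, div_self (norm_ne_zero_iff.2 hden)]

lemma coeffId (l : ℕ) (μ : ℝ) (hμ : μ ≠ 0) (k : ℕ) (hk : k ≤ l + 2) :
    ∑ n ∈ Finset.range (l + 3),
        pr ((l:ℂ)-1) n * pr (-(l:ℂ)-2) n / (pr (-1 + Complex.I*μ) n * (n.factorial : ℂ))
          * ((n.choose k : ℕ) : ℂ) * (-1)^k
      = heunT l μ *
        (pr ((l:ℂ)-1) k * pr (-(l:ℂ)-2) k / (pr (-1 - Complex.I*μ) k * (k.factorial : ℂ))) := by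
  set a : ℂ := (l:ℂ) - 1 with ha
  set b : ℂ := -(l:ℂ) - 2 with hb
  set c' : ℂ := -1 + Complex.I*μ with hc'
  set c : ℂ := -1 - Complex.I*μ with hc
  set N : ℕ := l + 2 - k with hN
  have hNc : (N:ℂ) = (l:ℂ) + 2 - k := by
    rw [hN, Nat.cast_sub hk]; push_cast; ring
  have hc'im : c'.im ≠ 0 := by simp [hc', hμ]
  have hsplit : l + 3 = k + (N + 1) := by omega
  rw [hsplit, Finset.sum_range_add]
  have h0 : ∑ i ∈ Finset.range k,
      pr a i * pr b i / (pr c' i * (i.factorial : ℂ)) * ((i.choose k : ℕ) : ℂ) * (-1)^k = 0 := by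
    refine Finset.sum_eq_zero fun i hi => ?_
    rw [Nat.choose_eq_zero_of_lt (Finset.mem_range.1 hi)]
    simp
  rw [h0, zero_add]
  have hterm : ∀ j ∈ Finset.range (N+1),
      pr a (k+j) * pr b (k+j) / (pr c' (k+j) * ((k+j).factorial : ℂ)) * (((k+j).choose k : ℕ) : ℂ) * (-1)^k
      = ((-1)^k * (pr a k * pr b k / (pr c' k * (k.factorial : ℂ)))) *
        (pr (a+k) j * pr (b+k) j / (pr (c'+k) j * (j.factorial : ℂ))) := by
    intro j hj
    have hfacN : (k+j).choose k * k.factorial * j.factorial = (k+j).factorial := by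
      have := Nat.choose_mul_factorial_mul_factorial (Nat.le_add_right k j)
      simpa using this
    have hfac : ((k+j).factorial : ℂ) = (((k+j).choose k : ℕ) : ℂ) * k.factorial * j.factorial := by
      exact_mod_cast (congrArg (fun t : ℕ => (t : ℂ)) hfacN).symm
    have h1 : pr c' k ≠ 0 := pr_ne_zero hc'im k
    have h2 : pr (c'+k) j ≠ 0 := pr_ne_zero (by simpa using hc'im) j
    have h3 : (k.factorial : ℂ) ≠ 0 := Nat.cast_ne_zero.2 (Nat.factorial_ne_zero k)
    have h4 : (j.factorial : ℂ) ≠ 0 := Nat.cast_ne_zero.2 (Nat.factorial_ne_zero j)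
    have h5 : (((k+j).choose k : ℕ) : ℂ) ≠ 0 :=
      Nat.cast_ne_zero.2 (Nat.choose_pos (Nat.le_add_right k j)).ne'
    rw [pr_add a, pr_add b, pr_add c', hfac]
    field_simp
  rw [Finset.sum_congr rfl hterm, ← Finset.mul_sum]
  have hb' : b + k = -(N:ℂ) := by rw [hb, hNc]; ring
  have hg := gauss N (a + k) (c' + k) (by simpa using hc'im)
  have hsub : c' + (k:ℂ) - (a + k) = c' - a := by ring
  rw [hsub] at hg
  rw [hb', hg]
  rw [heunT_eq]
  have hca : -(l:ℂ) + Complex.I*μ = c' - a := by rw [hc', ha]; ring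
  have hm1 : pr c' (l+2) = pr c' k * pr (c'+k) N := by rw [← pr_add]; congr 1; omega
  have hm2 : pr (c'-a) (l+2) = pr (c'-a) N * pr (c'-a+N) k := by rw [← pr_add]; congr 1; omega
  have hrefl : pr (c'-a+(N:ℂ)) k = (-1)^k * pr c k := by
    have h1 : c' - a + (N:ℂ) = (1 + Complex.I*μ) - k + 1 := by rw [hNc, hc', ha]; ring
    rw [h1, pr_reflect]
    have h2 : -(1 + Complex.I*(μ:ℂ)) = c := by rw [hc]; ring
    rw [h2]
  have h1 : pr c' k ≠ 0 := pr_ne_zero hc'im k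
  have h2 : pr (c'+k) N ≠ 0 := pr_ne_zero (by simpa using hc'im) N
  have h3 : (k.factorial : ℂ) ≠ 0 := Nat.cast_ne_zero.2 (Nat.factorial_ne_zero k)
  have h4 : pr c k ≠ 0 := pr_ne_zero (by simp [hc, hμ]) k
  rw [hca, hm1, hm2, hrefl]
  field_simp


/-- The hypergeometric polynomial `F(l-1, -l-2, -1-iμ; x)`. -/
noncomputable def heunQ (l : ℕ) (μ : ℝ) (x : ℂ) : ℂ :=
  ∑ n ∈ Finset.range (l + 3),
    ((ascPochhammer ℂ n).eval ((l : ℂ) - 1) * (ascPochhammer ℂ n).eval (-(l : ℂ) - 2)) /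
        ((ascPochhammer ℂ n).eval (-1 - Complex.I * (μ : ℂ)) * (n.factorial : ℂ)) * x ^ n

/-- The hypergeometric polynomial `F(l-1, -l-2, -1+iμ; 1-x)`. -/
noncomputable def heunP (l : ℕ) (μ : ℝ) (x : ℂ) : ℂ :=
  ∑ n ∈ Finset.range (l + 3),
    ((ascPochhammer ℂ n).eval ((l : ℂ) - 1) * (ascPochhammer ℂ n).eval (-(l : ℂ) - 2)) /
        ((ascPochhammer ℂ n).eval (-1 + Complex.I * (μ : ℂ)) * (n.factorial : ℂ)) * (1 - x) ^ n

/-- The connection formula `P = T · Q` between the zero-frequency Frobenius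
solutions normalized at the two horizons, where `T` is the zero-frequency transmission
coefficient; moreover `T ≠ 0` and `|T| = 1`. -/
theorem stmt_4 (l : ℕ) (hl : 2 ≤ l) (μ : ℝ) (hμ : μ ≠ 0) :
    (∀ x : ℂ, heunP l μ x = heunT l μ * heunQ l μ x) ∧
      heunT l μ ≠ 0 ∧ ‖heunT l μ‖ = 1 := by
  refine ⟨?_, heunT_ne_abs l μ hμ⟩
  intro x
  rw [heunP, heunQ]
  simp only [asc_eq_pr]
  have hbin : ∀ n ∈ Finset.range (l+3),
      pr ((l:ℂ)-1) n * pr (-(l:ℂ)-2) n / (pr (-1 + Complex.I*μ) n * (n.factorial : ℂ)) * (1-x)^n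
      = ∑ k ∈ Finset.range (l+3),
          pr ((l:ℂ)-1) n * pr (-(l:ℂ)-2) n / (pr (-1 + Complex.I*μ) n * (n.factorial : ℂ))
            * ((n.choose k : ℕ) : ℂ) * (-1)^k * x^k := by
    intro n hn
    have hn' : n + 1 ≤ l + 3 := by have := Finset.mem_range.1 hn; omega
    have h1 : (1 - x)^n = ∑ k ∈ Finset.range (n+1), (-x)^k * 1^(n-k) * ((n.choose k : ℕ) : ℂ) := by
      rw [show (1 : ℂ) - x = -x + 1 by ring, add_pow]
    have h2 : ∑ k ∈ Finset.range (n+1), (-x)^k * 1^(n-k) * ((n.choose k : ℕ) : ℂ)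
        = ∑ k ∈ Finset.range (l+3), (-x)^k * 1^(n-k) * ((n.choose k : ℕ) : ℂ) := by
      refine Finset.sum_subset (Finset.range_subset_range.2 hn') fun k hk hnk => ?_
      have : n < k := by
        simp only [Finset.mem_range] at hk hnk
        omega
      rw [Nat.choose_eq_zero_of_lt this]
      simp
    rw [h1, h2, Finset.mul_sum]
    refine Finset.sum_congr rfl fun k hk => ?_
    rw [one_pow, neg_pow]
    ring
  rw [Finset.sum_congr rfl hbin, Finset.sum_comm]
  have hcol : ∀ k ∈ Finset.range (l+3),
      ∑ n ∈ Finset.range (l+3),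
        pr ((l:ℂ)-1) n * pr (-(l:ℂ)-2) n / (pr (-1 + Complex.I*μ) n * (n.factorial : ℂ))
          * ((n.choose k : ℕ) : ℂ) * (-1)^k * x^k
      = heunT l μ *
        (pr ((l:ℂ)-1) k * pr (-(l:ℂ)-2) k / (pr (-1 - Complex.I*μ) k * (k.factorial : ℂ)) * x^k) := by
    intro k hk
    have hk' : k ≤ l + 2 := by have := Finset.mem_range.1 hk; omega
    rw [← Finset.sum_mul, coeffId l μ hμ k hk']
    ring
  rw [Finset.sum_congr rfl hcol, ← Finset.mul_sum]
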